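/- With ⊤_ι as above and z₁, ..., z_n with z_i ∈ 𝒜_{χ(i)}^{(ε(i))}, if exactly k of the maximal ε-monochromatic χ-intervals are ι-coloured, and d = 1 if both the ≺_χ-first and ≺_χ-last indices have ε-value ι and d = 0 otherwise, then the coefficient of z₁⋯z_n ⊗ 1 in ⊤_ι(z₁⋯z_n) is −k and the coefficient of 1 ⊗ z₁⋯z_n is d. -/

import Mathlib

noncomputable def chiKey {n : ℕ} (χ : Fin n → Bool) (i : Fin n) : Lex (ℕ × ℕ) :=
  toLex (if χ i then 0 else 1, if χ i then (i : ℕ) else n - (i : ℕ))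

noncomputable def sChi {n : ℕ} (χ : Fin n → Bool) : Equiv.Perm (Fin n) :=
  Tuple.sort (chiKey χ)

def ltChi {n : ℕ} (χ : Fin n → Bool) (i j : Fin n) : Prop :=
  (sChi χ).symm i < (sChi χ).symm j

noncomputable instance {n : ℕ} (χ : Fin n → Bool) (i j : Fin n) :
    Decidable (ltChi χ i j) :=
  inferInstanceAs (Decidable ((sChi χ).symm i < (sChi χ).symm j))

/-- `i ⪯_χ j`. -/
def leChi {n : ℕ} (χ : Fin n → Bool) (i j : Fin n) : Prop := ¬ ltChi χ j i

noncomputable instance {n : ℕ} (χ : Fin n → Bool) (i j : Fin n) :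
    Decidable (leChi χ i j) := inferInstanceAs (Decidable (¬ _))

/-- The closed `χ`-interval `[i,j]_χ`. -/
noncomputable def IccChi {n : ℕ} (χ : Fin n → Bool) (i j : Fin n) : Finset (Fin n) :=
  Finset.univ.filter fun k => leChi χ i k ∧ leChi χ k j

/-- The `χ`-interval `[i,j)_χ`. -/
noncomputable def IcoChi {n : ℕ} (χ : Fin n → Bool) (i j : Fin n) : Finset (Fin n) :=
  Finset.univ.filter fun k => leChi χ i k ∧ ltChi χ k j

/-- The `χ`-interval `(i,j]_χ`. -/
noncomputable def IocChi {n : ℕ} (χ : Fin n → Bool) (i j : Fin n) : Finset (Fin n) :=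
  Finset.univ.filter fun k => ltChi χ i k ∧ leChi χ k j

/-- The open `χ`-interval `(i,j)_χ`. -/
noncomputable def IooChi {n : ℕ} (χ : Fin n → Bool) (i j : Fin n) : Finset (Fin n) :=
  Finset.univ.filter fun k => ltChi χ i k ∧ ltChi χ k j

def IsChiInterval {n : ℕ} (χ : Fin n → Bool) (I : Set (Fin n)) : Prop :=
  ∀ a b c : Fin n, a ∈ I → c ∈ I → ltChi χ a b → ltChi χ b c → b ∈ I

def IsMono {n : ℕ} {ι : Type*} (ε : Fin n → ι) (I : Set (Fin n)) : Prop :=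
  ∀ a ∈ I, ∀ b ∈ I, ε a = ε b

def IsMaxMono {n : ℕ} {ι : Type*} (χ : Fin n → Bool) (ε : Fin n → ι)
    (J : Set (Fin n)) : Prop :=
  J.Nonempty ∧ IsChiInterval χ J ∧ IsMono ε J ∧
    ∀ K : Set (Fin n), IsChiInterval χ K → IsMono ε K → J ⊆ K → J = K

/-- The coefficient of the formal tensor `z_{Sᶜ} ⊗ z_S` in the defining sum of
`⊤_ι(z₁⋯z_n)`: the sum over pairs `i ⪯_χ j` in `ε⁻¹(ι)` of
`[S = [i,j]_χ] − [S = [i,j)_χ] − [S = (i,j]_χ] + [S = (i,j)_χ]`. -/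
noncomputable def taurCoeff {n : ℕ} {ι : Type*} [DecidableEq ι]
    (χ : Fin n → Bool) (ε : Fin n → ι) (c : ι) (S : Finset (Fin n)) : ℤ :=
  ∑ p : Fin n × Fin n,
    if ε p.1 = c ∧ ε p.2 = c ∧ leChi χ p.1 p.2 then
      (if S = IccChi χ p.1 p.2 then 1 else 0) - (if S = IcoChi χ p.1 p.2 then 1 else 0)
        - (if S = IocChi χ p.1 p.2 then 1 else 0) + (if S = IooChi χ p.1 p.2 then 1 else 0)
    else 0

section Helpers

variable {n : ℕ} {ι : Type*} [DecidableEq ι]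

lemma ltChi_apply (χ : Fin n → Bool) (a b : Fin n) :
    ltChi χ (sChi χ a) (sChi χ b) ↔ a < b := by
  simp [ltChi]

lemma leChi_apply (χ : Fin n → Bool) (a b : Fin n) :
    leChi χ (sChi χ a) (sChi χ b) ↔ a ≤ b := by
  simp [leChi, ltChi, not_lt]

lemma IccChi_eq (χ : Fin n → Bool) (a b : Fin n) :
    IccChi χ (sChi χ a) (sChi χ b) = (Finset.Icc a b).map (sChi χ).toEmbedding := by
  ext k
  simp only [IccChi, Finset.mem_filter, Finset.mem_univ, true_and, Finset.mem_map,
    Finset.mem_Icc, Equiv.coe_toEmbedding, leChi, ltChi, not_lt, Equiv.symm_apply_apply]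
  constructor
  · rintro ⟨h1, h2⟩
    exact ⟨(sChi χ).symm k, ⟨h1, h2⟩, (sChi χ).apply_symm_apply k⟩
  · rintro ⟨x, ⟨h1, h2⟩, rfl⟩
    simpa using ⟨h1, h2⟩

lemma IcoChi_eq (χ : Fin n → Bool) (a b : Fin n) :
    IcoChi χ (sChi χ a) (sChi χ b) = (Finset.Ico a b).map (sChi χ).toEmbedding := by
  ext k
  simp only [IcoChi, Finset.mem_filter, Finset.mem_univ, true_and, Finset.mem_map,
    Finset.mem_Ico, Equiv.coe_toEmbedding, leChi, ltChi, not_lt, Equiv.symm_apply_apply]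
  constructor
  · rintro ⟨h1, h2⟩
    exact ⟨(sChi χ).symm k, ⟨h1, h2⟩, (sChi χ).apply_symm_apply k⟩
  · rintro ⟨x, ⟨h1, h2⟩, rfl⟩
    simpa using ⟨h1, h2⟩

lemma IocChi_eq (χ : Fin n → Bool) (a b : Fin n) :
    IocChi χ (sChi χ a) (sChi χ b) = (Finset.Ioc a b).map (sChi χ).toEmbedding := by
  ext k
  simp only [IocChi, Finset.mem_filter, Finset.mem_univ, true_and, Finset.mem_map,
    Finset.mem_Ioc, Equiv.coe_toEmbedding, leChi, ltChi, not_lt, Equiv.symm_apply_apply]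
  constructor
  · rintro ⟨h1, h2⟩
    exact ⟨(sChi χ).symm k, ⟨h1, h2⟩, (sChi χ).apply_symm_apply k⟩
  · rintro ⟨x, ⟨h1, h2⟩, rfl⟩
    simpa using ⟨h1, h2⟩

lemma IooChi_eq (χ : Fin n → Bool) (a b : Fin n) :
    IooChi χ (sChi χ a) (sChi χ b) = (Finset.Ioo a b).map (sChi χ).toEmbedding := by
  ext k
  simp only [IooChi, Finset.mem_filter, Finset.mem_univ, true_and, Finset.mem_map,
    Finset.mem_Ioo, Equiv.coe_toEmbedding, leChi, ltChi, not_lt, Equiv.symm_apply_apply]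
  constructor
  · rintro ⟨h1, h2⟩
    exact ⟨(sChi χ).symm k, ⟨h1, h2⟩, (sChi χ).apply_symm_apply k⟩
  · rintro ⟨x, ⟨h1, h2⟩, rfl⟩
    simpa using ⟨h1, h2⟩

lemma taurCoeff_reindex (χ : Fin n → Bool) (ε : Fin n → ι) (c : ι) (S : Finset (Fin n)) :
    taurCoeff χ ε c S =
      ∑ p : Fin n × Fin n,
        if ε (sChi χ p.1) = c ∧ ε (sChi χ p.2) = c ∧ p.1 ≤ p.2 then
          (if S = (Finset.Icc p.1 p.2).map (sChi χ).toEmbedding then 1 else 0)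
            - (if S = (Finset.Ico p.1 p.2).map (sChi χ).toEmbedding then 1 else 0)
            - (if S = (Finset.Ioc p.1 p.2).map (sChi χ).toEmbedding then 1 else 0)
            + (if S = (Finset.Ioo p.1 p.2).map (sChi χ).toEmbedding then 1 else 0)
        else 0 := by
  rw [taurCoeff]
  refine (Fintype.sum_equiv (Equiv.prodCongr (sChi χ) (sChi χ)) _ _ ?_).symm
  rintro ⟨a, b⟩
  simp only [Equiv.prodCongr_apply, Prod.map]
  simp only [leChi_apply, IccChi_eq, IcoChi_eq, IocChi_eq, IooChi_eq]

end Helpers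

section Helpers2

variable {n : ℕ} {ι : Type*} [DecidableEq ι]

lemma map_eq_univ_iff (σ : Equiv.Perm (Fin n)) (s : Finset (Fin n)) :
    s.map σ.toEmbedding = Finset.univ ↔ s = Finset.univ := by
  conv_lhs => rw [← Finset.map_univ_equiv σ]
  exact (Finset.map_injective _).eq_iff

lemma Icc_eq_univ_iff (hn : 0 < n) (a b : Fin n) :
    Finset.Icc a b = Finset.univ ↔
      a = ⟨0, hn⟩ ∧ b = ⟨n - 1, Nat.sub_lt hn one_pos⟩ := by
  constructor
  · intro h
    have h0 : (⟨0, hn⟩ : Fin n) ∈ Finset.Icc a b := h ▸ Finset.mem_univ _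
    have h1 : (⟨n - 1, Nat.sub_lt hn one_pos⟩ : Fin n) ∈ Finset.Icc a b :=
      h ▸ Finset.mem_univ _
    rw [Finset.mem_Icc] at h0 h1
    refine ⟨le_antisymm h0.1 ?_, le_antisymm ?_ h1.2⟩
    · simp [Fin.le_def]
    · simp only [Fin.le_def]
      exact Nat.le_sub_one_of_lt b.2
  · rintro ⟨rfl, rfl⟩
    ext x
    simp only [Finset.mem_Icc, Finset.mem_univ, iff_true, Fin.le_def]
    exact ⟨Nat.zero_le _, Nat.le_sub_one_of_lt x.2⟩

lemma Ico_ne_univ (a b : Fin n) : Finset.Ico a b ≠ Finset.univ := by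
  intro h
  have : b ∈ Finset.Ico a b := h ▸ Finset.mem_univ _
  simp [Finset.mem_Ico] at this

lemma Ioc_ne_univ (a b : Fin n) : Finset.Ioc a b ≠ Finset.univ := by
  intro h
  have : a ∈ Finset.Ioc a b := h ▸ Finset.mem_univ _
  simp [Finset.mem_Ioc] at this

lemma Ioo_ne_univ (a b : Fin n) : Finset.Ioo a b ≠ Finset.univ := by
  intro h
  have : a ∈ Finset.Ioo a b := h ▸ Finset.mem_univ _
  simp [Finset.mem_Ioo] at this

lemma taurCoeff_univ (hn : 0 < n) (χ : Fin n → Bool) (ε : Fin n → ι) (c : ι) :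
    taurCoeff χ ε c (Finset.univ : Finset (Fin n)) =
      (if ε (sChi χ ⟨0, hn⟩) = c ∧ ε (sChi χ ⟨n - 1, Nat.sub_lt hn one_pos⟩) = c
        then 1 else 0) := by
  set z : Fin n := ⟨0, hn⟩ with hz
  set l : Fin n := ⟨n - 1, Nat.sub_lt hn one_pos⟩ with hl
  rw [taurCoeff_reindex]
  have key : ∀ p : Fin n × Fin n,
      (if ε (sChi χ p.1) = c ∧ ε (sChi χ p.2) = c ∧ p.1 ≤ p.2 then
        (if (Finset.univ : Finset (Fin n)) = (Finset.Icc p.1 p.2).map (sChi χ).toEmbedding then (1:ℤ) else 0)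
          - (if (Finset.univ : Finset (Fin n)) = (Finset.Ico p.1 p.2).map (sChi χ).toEmbedding then 1 else 0)
          - (if (Finset.univ : Finset (Fin n)) = (Finset.Ioc p.1 p.2).map (sChi χ).toEmbedding then 1 else 0)
          + (if (Finset.univ : Finset (Fin n)) = (Finset.Ioo p.1 p.2).map (sChi χ).toEmbedding then 1 else 0)
      else 0) =
      if p = (z, l) then
        (if ε (sChi χ z) = c ∧ ε (sChi χ l) = c then (1:ℤ) else 0) else 0 := by
    rintro ⟨a, b⟩
    have hico : ¬ ((Finset.univ : Finset (Fin n)) = (Finset.Ico a b).map (sChi χ).toEmbedding) := by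
      intro h
      exact Ico_ne_univ a b ((map_eq_univ_iff _ _).mp h.symm)
    have hioc : ¬ ((Finset.univ : Finset (Fin n)) = (Finset.Ioc a b).map (sChi χ).toEmbedding) := by
      intro h
      exact Ioc_ne_univ a b ((map_eq_univ_iff _ _).mp h.symm)
    have hioo : ¬ ((Finset.univ : Finset (Fin n)) = (Finset.Ioo a b).map (sChi χ).toEmbedding) := by
      intro h
      exact Ioo_ne_univ a b ((map_eq_univ_iff _ _).mp h.symm)
    have hicc : ((Finset.univ : Finset (Fin n)) = (Finset.Icc a b).map (sChi χ).toEmbedding) ↔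
        (a, b) = (z, l) := by
      rw [eq_comm, map_eq_univ_iff, Icc_eq_univ_iff hn, Prod.mk.injEq]
    by_cases hp : (a, b) = (z, l)
    · obtain ⟨rfl, rfl⟩ := Prod.ext_iff.mp hp
      have hzl : z ≤ l := Fin.le_def.mpr (Nat.zero_le _)
      simp [hicc, hico, hioc, hioo, hzl, hp]
    · have h1 : ¬ ((Finset.univ : Finset (Fin n)) = (Finset.Icc a b).map (sChi χ).toEmbedding) :=
        fun h => hp (hicc.mp h)
      simp [h1, hico, hioc, hioo, hp]
  rw [Finset.sum_congr rfl (fun p _ => key p)]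
  rw [Finset.sum_ite_eq' Finset.univ (z, l)]
  simp

end Helpers2

section Helpers3

variable {n : ℕ} {ι : Type*} [DecidableEq ι]

lemma Ioo_eq_empty_iff_fin (a b : Fin n) :
    Finset.Ioo a b = ∅ ↔ (b : ℕ) ≤ (a : ℕ) + 1 := by
  rw [Finset.eq_empty_iff_forall_notMem]
  constructor
  · intro h
    by_contra hc
    push_neg at hc
    exact h ⟨(a : ℕ) + 1, lt_trans hc b.2⟩
      (by simp only [Finset.mem_Ioo, Fin.lt_def]; omega)
  · intro h x hx
    simp only [Finset.mem_Ioo, Fin.lt_def] at hx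
    omega

lemma taurCoeff_empty (χ : Fin n → Bool) (ε : Fin n → ι) (c : ι) :
    taurCoeff χ ε c (∅ : Finset (Fin n)) =
      -((Finset.univ.filter fun a : Fin n => ε (sChi χ a) = c).card : ℤ)
      + (((Finset.univ : Finset (Fin n × Fin n)).filter fun p =>
          ε (sChi χ p.1) = c ∧ ε (sChi χ p.2) = c ∧ (p.2 : ℕ) = (p.1 : ℕ) + 1).card : ℤ) := by
  rw [taurCoeff_reindex]
  have key : ∀ p : Fin n × Fin n,
      (if ε (sChi χ p.1) = c ∧ ε (sChi χ p.2) = c ∧ p.1 ≤ p.2 then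
        (if (∅ : Finset (Fin n)) = (Finset.Icc p.1 p.2).map (sChi χ).toEmbedding then (1:ℤ) else 0)
          - (if (∅ : Finset (Fin n)) = (Finset.Ico p.1 p.2).map (sChi χ).toEmbedding then 1 else 0)
          - (if (∅ : Finset (Fin n)) = (Finset.Ioc p.1 p.2).map (sChi χ).toEmbedding then 1 else 0)
          + (if (∅ : Finset (Fin n)) = (Finset.Ioo p.1 p.2).map (sChi χ).toEmbedding then 1 else 0)
      else 0) =
      -(if ε (sChi χ p.1) = c ∧ ε (sChi χ p.2) = c ∧ p.1 = p.2 then (1:ℤ) else 0)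
      + (if ε (sChi χ p.1) = c ∧ ε (sChi χ p.2) = c ∧ (p.2 : ℕ) = (p.1 : ℕ) + 1 then (1:ℤ) else 0) := by
    rintro ⟨a, b⟩
    have e1 : ((∅ : Finset (Fin n)) = (Finset.Icc a b).map (sChi χ).toEmbedding) ↔ ¬ a ≤ b := by
      rw [eq_comm, Finset.map_eq_empty, Finset.Icc_eq_empty_iff]
    have e2 : ((∅ : Finset (Fin n)) = (Finset.Ico a b).map (sChi χ).toEmbedding) ↔ ¬ a < b := by
      rw [eq_comm, Finset.map_eq_empty, Finset.Ico_eq_empty_iff]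
    have e3 : ((∅ : Finset (Fin n)) = (Finset.Ioc a b).map (sChi χ).toEmbedding) ↔ ¬ a < b := by
      rw [eq_comm, Finset.map_eq_empty, Finset.Ioc_eq_empty_iff]
    have e4 : ((∅ : Finset (Fin n)) = (Finset.Ioo a b).map (sChi χ).toEmbedding) ↔ (b : ℕ) ≤ (a : ℕ) + 1 := by
      rw [eq_comm, Finset.map_eq_empty, Ioo_eq_empty_iff_fin]
    simp only [e1, e2, e3, e4, Fin.le_def, Fin.lt_def, Fin.ext_iff]
    by_cases hca : ε (sChi χ a) = c <;> by_cases hcb : ε (sChi χ b) = c <;>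
      simp only [hca, hcb, true_and, false_and, and_false, if_false, if_true] <;>
      (try split_ifs) <;> omega
  rw [Finset.sum_congr rfl (fun p _ => key p), Finset.sum_add_distrib, Finset.sum_neg_distrib]
  congr 1
  · rw [Finset.sum_boole]
    congr 2
    have : ((Finset.univ : Finset (Fin n × Fin n)).filter fun p =>
        ε (sChi χ p.1) = c ∧ ε (sChi χ p.2) = c ∧ p.1 = p.2).card
        = (Finset.univ.filter fun a : Fin n => ε (sChi χ a) = c).card := by
      apply Finset.card_nbij' (fun p => p.1) (fun a => (a, a))
      · rintro ⟨a, b⟩ hp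
        simp only [Finset.mem_coe, Finset.mem_filter, Finset.mem_univ, true_and] at hp ⊢
        exact hp.1
      · intro a ha
        simp only [Finset.mem_coe, Finset.mem_filter, Finset.mem_univ, true_and] at ha ⊢
        exact ⟨ha, ha, trivial⟩
      · rintro ⟨a, b⟩ hp
        simp only [Finset.mem_coe, Finset.mem_filter, Finset.mem_univ, true_and] at hp
        simp [hp.2.2]
      · intro a ha
        rfl
    rw [this]
  · rw [Finset.sum_boole]

end Helpers3

section Helpers4

variable {n : ℕ} {ι : Type*} [DecidableEq ι]

/-- run starts -/
noncomputable def runStarts (f : Fin n → ι) (c : ι) : Finset (Fin n) :=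
  Finset.univ.filter fun b => f b = c ∧ ∀ a : Fin n, (a : ℕ) + 1 = (b : ℕ) → f a ≠ c

lemma card_runStarts (f : Fin n → ι) (c : ι) :
    (runStarts f c).card
      + ((Finset.univ : Finset (Fin n × Fin n)).filter fun p =>
          f p.1 = c ∧ f p.2 = c ∧ (p.2 : ℕ) = (p.1 : ℕ) + 1).card
      = (Finset.univ.filter fun a : Fin n => f a = c).card := by
  classical
  set A := Finset.univ.filter fun a : Fin n => f a = c with hA
  have hsub : runStarts f c ⊆ A := by
    intro b hb
    simp only [runStarts, Finset.mem_filter, Finset.mem_univ, true_and, hA] at hb ⊢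
    exact hb.1
  have hcard : (A \ runStarts f c).card + (runStarts f c).card = A.card :=
    Finset.card_sdiff_add_card_eq_card hsub
  rw [← hcard, add_comm]
  congr 1
  apply Finset.card_nbij' (fun p : Fin n × Fin n => p.2)
    (fun b => ((⟨(b : ℕ) - 1, lt_of_le_of_lt (Nat.sub_le _ _) b.isLt⟩ : Fin n), b))
  · rintro ⟨a, b⟩ hp
    simp only [Finset.mem_coe, Finset.mem_filter, Finset.mem_univ, true_and] at hp
    simp only [Finset.mem_coe, hA, runStarts, Finset.mem_sdiff, Finset.mem_filter, Finset.mem_univ, true_and,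
      not_and, not_forall]
    exact ⟨hp.2.1, fun _ => ⟨a, by omega, by simp [hp.1]⟩⟩
  · intro b hb
    simp only [Finset.mem_coe, hA, runStarts, Finset.mem_sdiff, Finset.mem_filter, Finset.mem_univ, true_and,
      not_and, not_forall] at hb
    obtain ⟨hbc, hex⟩ := hb
    obtain ⟨a, ha1, ha2⟩ := hex hbc
    simp only [not_not] at ha2
    have hab : a = (⟨(b : ℕ) - 1, lt_of_le_of_lt (Nat.sub_le _ _) b.isLt⟩ : Fin n) := by
      apply Fin.ext
      simp only
      omega
    simp only [Finset.mem_coe, Finset.mem_filter, Finset.mem_univ, true_and]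
    exact ⟨hab ▸ ha2, hbc, by omega⟩
  · rintro ⟨a, b⟩ hp
    simp only [Finset.mem_coe, Finset.mem_filter, Finset.mem_univ, true_and] at hp
    have : (⟨(b : ℕ) - 1, lt_of_le_of_lt (Nat.sub_le _ _) b.isLt⟩ : Fin n) = a := by
      apply Fin.ext
      simp only
      omega
    simp [this]
  · intro b hb
    rfl

end Helpers4

section Helpers5

set_option linter.unusedSectionVars false

variable {n : ℕ} {ι : Type*} [DecidableEq ι]

def ConvexPos {n : ℕ} (I : Set (Fin n)) : Prop :=
  ∀ a b c : Fin n, a ∈ I → c ∈ I → a < b → b < c → b ∈ I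

def MaxRun {n : ℕ} {ι : Type*} (f : Fin n → ι) (I : Set (Fin n)) : Prop :=
  I.Nonempty ∧ ConvexPos I ∧ IsMono f I ∧
    ∀ K : Set (Fin n), ConvexPos K → IsMono f K → I ⊆ K → I = K

def runFrom {n : ℕ} {ι : Type*} (f : Fin n → ι) (c : ι) (a : Fin n) : Set (Fin n) :=
  {x | a ≤ x ∧ ∀ y : Fin n, a ≤ y → y ≤ x → f y = c}

lemma self_mem_runFrom {f : Fin n → ι} {c : ι} {a : Fin n} (ha : f a = c) :
    a ∈ runFrom f c a := by
  refine ⟨le_refl _, fun y h1 h2 => ?_⟩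
  have : y = a := le_antisymm h2 h1
  subst this; exact ha

lemma runFrom_colour {f : Fin n → ι} {c : ι} {a : Fin n} {x : Fin n}
    (hx : x ∈ runFrom f c a) : f x = c :=
  hx.2 x hx.1 (le_refl _)

lemma runFrom_le {f : Fin n → ι} {c : ι} {a x : Fin n} (hx : x ∈ runFrom f c a) : a ≤ x :=
  hx.1

lemma runFrom_convex (f : Fin n → ι) (c : ι) (a : Fin n) : ConvexPos (runFrom f c a) := by
  intro x y z hx hz hxy hyz
  refine ⟨le_trans hx.1 (le_of_lt hxy), fun w h1 h2 => ?_⟩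
  exact hz.2 w h1 (le_trans h2 (le_of_lt hyz))

lemma runFrom_mono (f : Fin n → ι) (c : ι) (a : Fin n) : IsMono f (runFrom f c a) := by
  intro x hx y hy
  rw [runFrom_colour hx, runFrom_colour hy]

/-- `a` is a run start. -/
def IsRunStart (f : Fin n → ι) (c : ι) (a : Fin n) : Prop :=
  f a = c ∧ ∀ b : Fin n, (b : ℕ) + 1 = (a : ℕ) → f b ≠ c

lemma runFrom_maxRun {f : Fin n → ι} {c : ι} {a : Fin n} (ha : IsRunStart f c a) :
    MaxRun f (runFrom f c a) := by
  obtain ⟨hac, hstart⟩ := ha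
  refine ⟨⟨a, self_mem_runFrom hac⟩, runFrom_convex f c a, runFrom_mono f c a, ?_⟩
  intro K hKconv hKmono hsub
  have haK : a ∈ K := hsub (self_mem_runFrom hac)
  have hKcol : ∀ k ∈ K, f k = c := by
    intro k hk
    rw [hKmono k hk a haK, hac]
  refine Set.Subset.antisymm hsub ?_
  intro x hx
  have hax : a ≤ x := by
    by_contra hlt
    push_neg at hlt
    have h1 : 1 ≤ (a : ℕ) := by omega
    set a' : Fin n := ⟨(a : ℕ) - 1, lt_of_le_of_lt (Nat.sub_le _ _) a.isLt⟩ with ha'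
    have ha'K : a' ∈ K := by
      rcases eq_or_lt_of_le (show x ≤ a' by rw [Fin.le_def]; simp only [ha']; omega) with h | h
      · rwa [← h]
      · exact hKconv x a' a hx haK h (by rw [Fin.lt_def]; simp only [ha']; omega)
    exact hstart a' (by simp only [ha']; omega) (hKcol a' ha'K)
  refine ⟨hax, fun y h1 h2 => ?_⟩
  have hyK : y ∈ K := by
    rcases eq_or_lt_of_le h1 with h | h
    · rwa [← h]
    · rcases eq_or_lt_of_le h2 with h' | h'
      · rwa [h']
      · exact hKconv a y x haK hx h h'
  exact hKcol y hyK

lemma maxRun_eq_runFrom {f : Fin n → ι} {c : ι} {I : Set (Fin n)}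
    (hI : MaxRun f I) (hcol : ∀ a ∈ I, f a = c) :
    ∃ a : Fin n, IsRunStart f c a ∧ I = runFrom f c a ∧ a ∈ I ∧ ∀ x ∈ I, a ≤ x := by
  obtain ⟨hne, hconv, hmono, hmax⟩ := hI
  obtain ⟨m, hm, hmin⟩ := (wellFounded_lt (α := Fin n)).has_min I hne
  have hminle : ∀ x ∈ I, m ≤ x := fun x hx => not_lt.mp (hmin x hx)
  have hmc : f m = c := hcol m hm
  have hstart : IsRunStart f c m := by
    refine ⟨hmc, fun b hb hbc => ?_⟩
    have hbm : b < m := by rw [Fin.lt_def]; omega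
    have hK : ConvexPos (insert b I) := by
      intro x y z hx hz hxy hyz
      rcases hx with rfl | hx
      · rcases hz with rfl | hz
        · exact absurd (lt_trans hxy hyz) (lt_irrefl _)
        · have hym : m ≤ y := by
            rw [Fin.le_def]
            have := Fin.lt_def.mp hxy
            omega
          rcases eq_or_lt_of_le hym with h | h
          · right; rwa [← h]
          · right; exact hconv m y z hm hz h hyz
      · rcases hz with rfl | hz
        · have := hminle x hx
          rw [Fin.le_def] at this
          have h1 := Fin.lt_def.mp hxy
          have h2 := Fin.lt_def.mp hyz
          omega
        · right; exact hconv x y z hx hz hxy hyz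
    have hKcol : ∀ k ∈ insert b I, f k = c := by
      intro k hk
      rcases hk with rfl | hk
      · exact hbc
      · exact hcol k hk
    have hKmono : IsMono f (insert b I) := by
      intro x hx y hy
      rw [hKcol x hx, hKcol y hy]
    have := hmax (insert b I) hK hKmono (Set.subset_insert b I)
    have hbI : b ∈ I := this ▸ Set.mem_insert b I
    have := hminle b hbI
    rw [Fin.le_def] at this
    omega
  have hsub : I ⊆ runFrom f c m := by
    intro x hx
    refine ⟨hminle x hx, fun y h1 h2 => ?_⟩
    have hyI : y ∈ I := by
      rcases eq_or_lt_of_le h1 with h | h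
      · rwa [← h]
      · rcases eq_or_lt_of_le h2 with h' | h'
        · rwa [h']
        · exact hconv m y x hm hx h h'
    exact hcol y hyI
  exact ⟨m, hstart, hmax _ (runFrom_convex f c m) (runFrom_mono f c m) hsub, hm, hminle⟩

lemma maxRun_set_eq (f : Fin n → ι) (c : ι) :
    {I : Set (Fin n) | MaxRun f I ∧ ∀ a ∈ I, f a = c}
      = runFrom f c '' {a : Fin n | IsRunStart f c a} := by
  ext I
  constructor
  · rintro ⟨hI, hcol⟩
    obtain ⟨a, ha, heq, _, _⟩ := maxRun_eq_runFrom hI hcol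
    exact ⟨a, ha, heq.symm⟩
  · rintro ⟨a, ha, rfl⟩
    exact ⟨runFrom_maxRun ha, fun x hx => runFrom_colour hx⟩

lemma ncard_maxRun (f : Fin n → ι) (c : ι) :
    Set.ncard {I : Set (Fin n) | MaxRun f I ∧ ∀ a ∈ I, f a = c}
      = (runStarts f c).card := by
  rw [maxRun_set_eq]
  have hinj : Set.InjOn (runFrom f c) {a : Fin n | IsRunStart f c a} := by
    intro a ha a' ha' h
    have h1 : a ∈ runFrom f c a' := h ▸ self_mem_runFrom ha.1
    have h2 : a' ∈ runFrom f c a := h.symm ▸ self_mem_runFrom ha'.1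
    exact le_antisymm h2.1 h1.1
  rw [Set.ncard_image_of_injOn hinj]
  have : {a : Fin n | IsRunStart f c a} = ↑(runStarts f c) := by
    ext a
    simp [runStarts, IsRunStart]
  rw [this, Set.ncard_coe_finset]

end Helpers5

section Helpers6

set_option linter.unusedSectionVars false

variable {n : ℕ} {ι : Type*} [DecidableEq ι]

lemma isChiInterval_image (χ : Fin n → Bool) (I : Set (Fin n)) :
    IsChiInterval χ ((sChi χ) '' I) ↔ ConvexPos I := by
  constructor
  · intro h a b c ha hc h1 h2
    have := h (sChi χ a) (sChi χ b) (sChi χ c) ⟨a, ha, rfl⟩ ⟨c, hc, rfl⟩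
      ((ltChi_apply χ a b).mpr h1) ((ltChi_apply χ b c).mpr h2)
    obtain ⟨b', hb', he⟩ := this
    rwa [(sChi χ).injective he] at hb'
  · intro h a b c ha hc h1 h2
    obtain ⟨a', ha', rfl⟩ := ha
    obtain ⟨c', hc', rfl⟩ := hc
    refine ⟨(sChi χ).symm b, h a' _ c' ha' hc' ?_ ?_, (sChi χ).apply_symm_apply b⟩
    · simpa [ltChi] using h1
    · simpa [ltChi] using h2

lemma isMono_image (ε : Fin n → ι) (σ : Equiv.Perm (Fin n)) (I : Set (Fin n)) :
    IsMono ε (σ '' I) ↔ IsMono (fun a => ε (σ a)) I := by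
  constructor
  · intro h a ha b hb
    exact h _ ⟨a, ha, rfl⟩ _ ⟨b, hb, rfl⟩
  · rintro h x ⟨a, ha, rfl⟩ y ⟨b, hb, rfl⟩
    exact h a ha b hb

lemma isMaxMono_image (χ : Fin n → Bool) (ε : Fin n → ι) (I : Set (Fin n)) :
    IsMaxMono χ ε ((sChi χ) '' I) ↔ MaxRun (fun a => ε (sChi χ a)) I := by
  constructor
  · rintro ⟨hne, hint, hmono, hmax⟩
    refine ⟨Set.image_nonempty.mp hne, (isChiInterval_image χ I).mp hint,
      (isMono_image ε (sChi χ) I).mp hmono, ?_⟩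
    intro K hK hKm hsub
    have := hmax (sChi χ '' K) ((isChiInterval_image χ K).mpr hK)
      ((isMono_image ε (sChi χ) K).mpr hKm) (Set.image_mono hsub)
    exact Set.image_injective.mpr (sChi χ).injective this
  · rintro ⟨hne, hconv, hmono, hmax⟩
    refine ⟨hne.image _, (isChiInterval_image χ I).mpr hconv,
      (isMono_image ε (sChi χ) I).mpr hmono, ?_⟩
    intro K hK hKm hsub
    have hKeq : sChi χ '' ((sChi χ).symm '' K) = K := by
      rw [Set.image_image]; simp
    have h1 : ConvexPos ((sChi χ).symm '' K) := (isChiInterval_image χ _).mp (by rwa [hKeq])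
    have h2 : IsMono (fun a => ε (sChi χ a)) ((sChi χ).symm '' K) :=
      (isMono_image ε (sChi χ) _).mp (by rwa [hKeq])
    have h3 : I ⊆ (sChi χ).symm '' K := by
      intro x hx
      exact ⟨sChi χ x, hsub ⟨x, hx, rfl⟩, by simp⟩
    have := hmax _ h1 h2 h3
    rw [this, hKeq]

lemma maxMono_set_eq (χ : Fin n → Bool) (ε : Fin n → ι) (c : ι) :
    {J : Set (Fin n) | IsMaxMono χ ε J ∧ ∀ a ∈ J, ε a = c}
      = Set.image (sChi χ) ''
        {I : Set (Fin n) | MaxRun (fun a => ε (sChi χ a)) I ∧ ∀ a ∈ I, ε (sChi χ a) = c} := by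
  ext J
  constructor
  · rintro ⟨hJ, hcol⟩
    have hJeq : sChi χ '' ((sChi χ).symm '' J) = J := by rw [Set.image_image]; simp
    refine ⟨(sChi χ).symm '' J, ⟨?_, ?_⟩, hJeq⟩
    · exact (isMaxMono_image χ ε _).mp (by rwa [hJeq])
    · rintro a ⟨x, hx, rfl⟩
      simpa using hcol x hx
  · rintro ⟨I, ⟨hI, hcol⟩, rfl⟩
    refine ⟨(isMaxMono_image χ ε I).mpr hI, ?_⟩
    rintro a ⟨x, hx, rfl⟩
    exact hcol x hx

lemma ncard_maxMono (χ : Fin n → Bool) (ε : Fin n → ι) (c : ι) :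
    Set.ncard {J : Set (Fin n) | IsMaxMono χ ε J ∧ ∀ a ∈ J, ε a = c}
      = (runStarts (fun a => ε (sChi χ a)) c).card := by
  rw [maxMono_set_eq,
    Set.ncard_image_of_injective _ (Set.image_injective.mpr (sChi χ).injective),
    ncard_maxRun]

end Helpers6

/-- The coefficient of `z₁⋯z_n ⊗ 1` (i.e. of `S = ∅`) in `⊤_ι(z₁⋯z_n)` is `−k`, where
`k` is the number of `ι`-coloured maximal `ε`-monochromatic `χ`-intervals; and the
coefficient of `1 ⊗ z₁⋯z_n` (i.e. of `S = univ`) is `1` if both the `≺_χ`-first and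
`≺_χ`-last indices are `ι`-coloured, and `0` otherwise. -/
theorem taur_edge_coefficients {n : ℕ} {ι : Type*} [DecidableEq ι] (hn : 0 < n)
    (χ : Fin n → Bool) (ε : Fin n → ι) (c : ι) :
    taurCoeff χ ε c (∅ : Finset (Fin n)) =
        -(Set.ncard {J : Set (Fin n) | IsMaxMono χ ε J ∧ ∀ a ∈ J, ε a = c} : ℤ) ∧
    taurCoeff χ ε c (Finset.univ : Finset (Fin n)) =
        (if ε (sChi χ ⟨0, hn⟩) = c ∧ ε (sChi χ ⟨n - 1, Nat.sub_lt hn one_pos⟩) = c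
          then 1 else 0) := by
  constructor
  · rw [taurCoeff_empty, ncard_maxMono]
    have h := card_runStarts (fun a => ε (sChi χ a)) c
    omega
  · exact taurCoeff_univ hn χ ε c
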